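/- Let p_{i,j} (1 ≤ i,j ≤ g) be complex numbers with p_{i,j} = p_{j,i}, and set E(e_1,e_2) = (e_1−e_2)·(f(e_1,e_2) − (e_1−e_2)² Σ_{i,j=1}^g p_{i,j} e_1^{i−1} e_2^{j−1}) and Ẽ(e_1,e_2,e_3,e_4) = E(e_2,e_3)E(e_4,e_1) + E(e_3,e_1)E(e_4,e_2) + E(e_1,e_2)E(e_4,e_3). Then the polynomial Ẽ is divisible in ℂ[e_1,e_2,e_3,e_4] by (e_2−e_1)(e_3−e_2)(e_3−e_1)(e_4−e_3)(e_4−e_2)(e_4−e_1), and the quotient Ẽ/((e_2−e_1)(e_3−e_2)(e_3−e_1)(e_4−e_3)(e_4−e_2)(e_4−e_1)) is a symmetric polynomial in the four variables e_1, e_2, e_3, e_4. -/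
import Mathlib


open MvPolynomial

/-- `f(e_u,e_v)` as a polynomial in the four variables `e₁,e₂,e₃,e₄`. -/
noncomputable def fp4 (g : ℕ) (ν : ℤ → ℂ) (u v : Fin 4) : MvPolynomial (Fin 4) ℂ :=
  ∑ i ∈ Finset.range (g+2), (X u)^i * (X v)^i *
    (C (2 * ν (4*(g:ℤ)+4-4*(i:ℤ))) + C (ν (4*(g:ℤ)+2-4*(i:ℤ))) * (X u + X v))

/-- `E(e_u,e_v) = (e_u-e_v)(f(e_u,e_v) - (e_u-e_v)² Σ p_{ij} e_u^{i-1} e_v^{j-1})`. -/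
noncomputable def Ep (g : ℕ) (ν : ℤ → ℂ) (p : Fin g → Fin g → ℂ) (u v : Fin 4) :
    MvPolynomial (Fin 4) ℂ :=
  (X u - X v) * (fp4 g ν u v -
    (X u - X v)^2 * ∑ i : Fin g, ∑ j : Fin g, C (p i j) * (X u)^(i:ℕ) * (X v)^(j:ℕ))

lemma fp4_comm (g : ℕ) (ν : ℤ → ℂ) (u v : Fin 4) : fp4 g ν u v = fp4 g ν v u := by
  unfold fp4; exact Finset.sum_congr rfl fun i _ => by ring

lemma Psum_comm (g : ℕ) (p : Fin g → Fin g → ℂ) (hp : ∀ i j, p i j = p j i) (u v : Fin 4) :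
    (∑ i : Fin g, ∑ j : Fin g, C (p i j) * (X u)^(i:ℕ) * (X v)^(j:ℕ) : MvPolynomial (Fin 4) ℂ)
      = ∑ i : Fin g, ∑ j : Fin g, C (p i j) * (X v)^(i:ℕ) * (X u)^(j:ℕ) := by
  rw [Finset.sum_comm]
  exact Finset.sum_congr rfl fun i _ => Finset.sum_congr rfl fun j _ => by rw [hp j i]; ring

lemma Ep_swap (g : ℕ) (ν : ℤ → ℂ) (p : Fin g → Fin g → ℂ) (hp : ∀ i j, p i j = p j i)
    (u v : Fin 4) : Ep g ν p u v = - Ep g ν p v u := by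
  unfold Ep; rw [fp4_comm g ν v u, Psum_comm g p hp v u]; ring

lemma Ep_self (g : ℕ) (ν : ℤ → ℂ) (p : Fin g → Fin g → ℂ) (u : Fin 4) : Ep g ν p u u = 0 := by
  simp [Ep]

lemma rename_fp4 (g : ℕ) (ν : ℤ → ℂ) (σ : Fin 4 → Fin 4) (u v : Fin 4) :
    rename σ (fp4 g ν u v) = fp4 g ν (σ u) (σ v) := by
  simp [fp4]

lemma rename_Ep (g : ℕ) (ν : ℤ → ℂ) (p : Fin g → Fin g → ℂ) (σ : Fin 4 → Fin 4) (u v : Fin 4) :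
    rename σ (Ep g ν p u v) = Ep g ν p (σ u) (σ v) := by
  simp [Ep, rename_fp4]

lemma sub_dvd_of_rename (i j : Fin 4) (P : MvPolynomial (Fin 4) ℂ)
    (h : rename (fun k => if k = i then j else k) P = 0) :
    (X i - X j : MvPolynomial (Fin 4) ℂ) ∣ P := by
  set r := fun k => if k = i then j else k with hr
  have key : ∀ Q : MvPolynomial (Fin 4) ℂ, (X i - X j : MvPolynomial (Fin 4) ℂ) ∣ Q - rename r Q := by
    intro Q
    induction Q using MvPolynomial.induction_on with
    | C a => simp
    | add q q' hq hq' =>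
        rw [map_add]
        have h2 := dvd_add hq hq'
        have : q - rename r q + (q' - rename r q') = q + q' - (rename r q + rename r q') := by ring
        rwa [this] at h2
    | mul_X q s hq =>
        rw [map_mul, rename_X]
        by_cases hs : s = i
        · subst hs
          have hrs : r s = j := by simp [hr]
          rw [hrs]
          have : q * X s - rename r q * X j
              = (q - rename r q) * X s + rename r q * (X s - X j) := by ring
          rw [this]
          exact dvd_add (hq.mul_right _) (dvd_mul_left _ _)
        · have hrs : r s = s := by simp [hr, hs]
          rw [hrs]
          have : q * X s - rename r q * X s = (q - rename r q) * X s := by ring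
          rw [this]
          exact hq.mul_right _
  have h2 := key P
  rwa [h, sub_zero] at h2

lemma Xsub_ne (a b : Fin 4) (h : a ≠ b) : (X a - X b : MvPolynomial (Fin 4) ℂ) ≠ 0 :=
  sub_ne_zero.mpr fun he => h (MvPolynomial.X_injective he)

lemma Etil_swap (g : ℕ) (ν : ℤ → ℂ) (p : Fin g → Fin g → ℂ) (hp : ∀ i j, p i j = p j i)
    (x y : Fin 4) (hxy : x ≠ y) :
    rename ⇑(Equiv.swap x y)
      (Ep g ν p 1 2 * Ep g ν p 3 0 + Ep g ν p 2 0 * Ep g ν p 3 1 + Ep g ν p 0 1 * Ep g ν p 3 2)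
    = -(Ep g ν p 1 2 * Ep g ν p 3 0 + Ep g ν p 2 0 * Ep g ν p 3 1 + Ep g ν p 0 1 * Ep g ν p 3 2) := by
  simp only [map_add, map_mul, rename_Ep]
  fin_cases x <;> fin_cases y
  · exact absurd rfl hxy
  · show Ep g ν p 0 2 * Ep g ν p 3 1 + Ep g ν p 2 1 * Ep g ν p 3 0 + Ep g ν p 1 0 * Ep g ν p 3 2 = _
    rw [Ep_swap g ν p hp 0 2, Ep_swap g ν p hp 2 1, Ep_swap g ν p hp 1 0]; ring
  · show Ep g ν p 1 0 * Ep g ν p 3 2 + Ep g ν p 0 2 * Ep g ν p 3 1 + Ep g ν p 2 1 * Ep g ν p 3 0 = _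
    rw [Ep_swap g ν p hp 1 0, Ep_swap g ν p hp 0 2, Ep_swap g ν p hp 2 1]; ring
  · show Ep g ν p 1 2 * Ep g ν p 0 3 + Ep g ν p 2 3 * Ep g ν p 0 1 + Ep g ν p 3 1 * Ep g ν p 0 2 = _
    rw [Ep_swap g ν p hp 0 3, Ep_swap g ν p hp 2 3, Ep_swap g ν p hp 0 2]; ring
  · show Ep g ν p 0 2 * Ep g ν p 3 1 + Ep g ν p 2 1 * Ep g ν p 3 0 + Ep g ν p 1 0 * Ep g ν p 3 2 = _
    rw [Ep_swap g ν p hp 0 2, Ep_swap g ν p hp 2 1, Ep_swap g ν p hp 1 0]; ring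
  · exact absurd rfl hxy
  · show Ep g ν p 2 1 * Ep g ν p 3 0 + Ep g ν p 1 0 * Ep g ν p 3 2 + Ep g ν p 0 2 * Ep g ν p 3 1 = _
    rw [Ep_swap g ν p hp 2 1, Ep_swap g ν p hp 1 0, Ep_swap g ν p hp 0 2]; ring
  · show Ep g ν p 3 2 * Ep g ν p 1 0 + Ep g ν p 2 0 * Ep g ν p 1 3 + Ep g ν p 0 3 * Ep g ν p 1 2 = _
    rw [Ep_swap g ν p hp 1 0, Ep_swap g ν p hp 1 3, Ep_swap g ν p hp 0 3]; ring
  · show Ep g ν p 1 0 * Ep g ν p 3 2 + Ep g ν p 0 2 * Ep g ν p 3 1 + Ep g ν p 2 1 * Ep g ν p 3 0 = _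
    rw [Ep_swap g ν p hp 1 0, Ep_swap g ν p hp 0 2, Ep_swap g ν p hp 2 1]; ring
  · show Ep g ν p 2 1 * Ep g ν p 3 0 + Ep g ν p 1 0 * Ep g ν p 3 2 + Ep g ν p 0 2 * Ep g ν p 3 1 = _
    rw [Ep_swap g ν p hp 2 1, Ep_swap g ν p hp 1 0, Ep_swap g ν p hp 0 2]; ring
  · exact absurd rfl hxy
  · show Ep g ν p 1 3 * Ep g ν p 2 0 + Ep g ν p 3 0 * Ep g ν p 2 1 + Ep g ν p 0 1 * Ep g ν p 2 3 = _
    rw [Ep_swap g ν p hp 1 3, Ep_swap g ν p hp 2 1, Ep_swap g ν p hp 2 3]; ring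
  · show Ep g ν p 1 2 * Ep g ν p 0 3 + Ep g ν p 2 3 * Ep g ν p 0 1 + Ep g ν p 3 1 * Ep g ν p 0 2 = _
    rw [Ep_swap g ν p hp 0 3, Ep_swap g ν p hp 2 3, Ep_swap g ν p hp 0 2]; ring
  · show Ep g ν p 3 2 * Ep g ν p 1 0 + Ep g ν p 2 0 * Ep g ν p 1 3 + Ep g ν p 0 3 * Ep g ν p 1 2 = _
    rw [Ep_swap g ν p hp 1 0, Ep_swap g ν p hp 1 3, Ep_swap g ν p hp 0 3]; ring
  · show Ep g ν p 1 3 * Ep g ν p 2 0 + Ep g ν p 3 0 * Ep g ν p 2 1 + Ep g ν p 0 1 * Ep g ν p 2 3 = _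
    rw [Ep_swap g ν p hp 1 3, Ep_swap g ν p hp 2 1, Ep_swap g ν p hp 2 3]; ring
  · exact absurd rfl hxy

lemma V_swap (x y : Fin 4) (hxy : x ≠ y) :
    rename ⇑(Equiv.swap x y)
      ((X 1 - X 0) * (X 2 - X 1) * (X 2 - X 0) * (X 3 - X 2) * (X 3 - X 1) * (X 3 - X 0) :
        MvPolynomial (Fin 4) ℂ)
    = -((X 1 - X 0) * (X 2 - X 1) * (X 2 - X 0) * (X 3 - X 2) * (X 3 - X 1) * (X 3 - X 0)) := by
  simp only [map_mul, map_sub, rename_X]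
  fin_cases x <;> fin_cases y
  · exact absurd rfl hxy
  · show ((X 0 - X 1) * (X 2 - X 0) * (X 2 - X 1) * (X 3 - X 2) * (X 3 - X 0) * (X 3 - X 1) :
        MvPolynomial (Fin 4) ℂ) = _
    ring
  · show ((X 1 - X 2) * (X 0 - X 1) * (X 0 - X 2) * (X 3 - X 0) * (X 3 - X 1) * (X 3 - X 2) :
        MvPolynomial (Fin 4) ℂ) = _
    ring
  · show ((X 1 - X 3) * (X 2 - X 1) * (X 2 - X 3) * (X 0 - X 2) * (X 0 - X 1) * (X 0 - X 3) :
        MvPolynomial (Fin 4) ℂ) = _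
    ring
  · show ((X 0 - X 1) * (X 2 - X 0) * (X 2 - X 1) * (X 3 - X 2) * (X 3 - X 0) * (X 3 - X 1) :
        MvPolynomial (Fin 4) ℂ) = _
    ring
  · exact absurd rfl hxy
  · show ((X 2 - X 0) * (X 1 - X 2) * (X 1 - X 0) * (X 3 - X 1) * (X 3 - X 2) * (X 3 - X 0) :
        MvPolynomial (Fin 4) ℂ) = _
    ring
  · show ((X 3 - X 0) * (X 2 - X 3) * (X 2 - X 0) * (X 1 - X 2) * (X 1 - X 3) * (X 1 - X 0) :
        MvPolynomial (Fin 4) ℂ) = _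
    ring
  · show ((X 1 - X 2) * (X 0 - X 1) * (X 0 - X 2) * (X 3 - X 0) * (X 3 - X 1) * (X 3 - X 2) :
        MvPolynomial (Fin 4) ℂ) = _
    ring
  · show ((X 2 - X 0) * (X 1 - X 2) * (X 1 - X 0) * (X 3 - X 1) * (X 3 - X 2) * (X 3 - X 0) :
        MvPolynomial (Fin 4) ℂ) = _
    ring
  · exact absurd rfl hxy
  · show ((X 1 - X 0) * (X 3 - X 1) * (X 3 - X 0) * (X 2 - X 3) * (X 2 - X 1) * (X 2 - X 0) :
        MvPolynomial (Fin 4) ℂ) = _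
    ring
  · show ((X 1 - X 3) * (X 2 - X 1) * (X 2 - X 3) * (X 0 - X 2) * (X 0 - X 1) * (X 0 - X 3) :
        MvPolynomial (Fin 4) ℂ) = _
    ring
  · show ((X 3 - X 0) * (X 2 - X 3) * (X 2 - X 0) * (X 1 - X 2) * (X 1 - X 3) * (X 1 - X 0) :
        MvPolynomial (Fin 4) ℂ) = _
    ring
  · show ((X 1 - X 0) * (X 3 - X 1) * (X 3 - X 0) * (X 2 - X 3) * (X 2 - X 1) * (X 2 - X 0) :
        MvPolynomial (Fin 4) ℂ) = _
    ring
  · exact absurd rfl hxy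

lemma alt_of_swaps (P : MvPolynomial (Fin 4) ℂ)
    (h : ∀ x y : Fin 4, x ≠ y → rename ⇑(Equiv.swap x y) P = -P) (π : Equiv.Perm (Fin 4)) :
    rename ⇑π P = ((Equiv.Perm.sign π : ℤ) • P) := by
  refine Equiv.Perm.swap_induction_on π ?_ ?_
  · simp [rename_id]
  · intro f x y hxy hf
    rw [Equiv.Perm.coe_mul, ← rename_rename, hf, map_zsmul, h x y hxy,
      Equiv.Perm.sign_mul, Equiv.Perm.sign_swap hxy]
    push_cast
    rw [smul_neg, neg_one_mul, neg_smul]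

/-- `Ẽ = E(e₂,e₃)E(e₄,e₁) + E(e₃,e₁)E(e₄,e₂) + E(e₁,e₂)E(e₄,e₃)` is divisible by
`(e₂-e₁)(e₃-e₂)(e₃-e₁)(e₄-e₃)(e₄-e₂)(e₄-e₁)` and the quotient is symmetric in `e₁,e₂,e₃,e₄`. -/
theorem stmt_6 (g : ℕ) (hg : 1 ≤ g) (ν : ℤ → ℂ) (hν0 : ν 0 ≠ 0) (hνm2 : ν (-2) = 0)
    (p : Fin g → Fin g → ℂ) (hp : ∀ i j, p i j = p j i) :
    ∃ Q : MvPolynomial (Fin 4) ℂ,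
      Ep g ν p 1 2 * Ep g ν p 3 0 + Ep g ν p 2 0 * Ep g ν p 3 1 + Ep g ν p 0 1 * Ep g ν p 3 2
        = (X 1 - X 0) * (X 2 - X 1) * (X 2 - X 0) *
            (X 3 - X 2) * (X 3 - X 1) * (X 3 - X 0) * Q ∧
      ∀ π : Equiv.Perm (Fin 4), MvPolynomial.rename ⇑π Q = Q := by
  set Et : MvPolynomial (Fin 4) ℂ :=
    Ep g ν p 1 2 * Ep g ν p 3 0 + Ep g ν p 2 0 * Ep g ν p 3 1 + Ep g ν p 0 1 * Ep g ν p 3 2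
    with hEt
  -- the six vanishing facts
  have h1 : rename (fun k => if k = (1:Fin 4) then (0:Fin 4) else k) Et = 0 := by
    rw [hEt]; simp only [map_add, map_mul, rename_Ep]
    show Ep g ν p 0 2 * Ep g ν p 3 0 + Ep g ν p 2 0 * Ep g ν p 3 0 + Ep g ν p 0 0 * Ep g ν p 3 2 = 0
    rw [Ep_swap g ν p hp 0 2, Ep_self g ν p 0]; ring
  have h2 : rename (fun k => if k = (2:Fin 4) then (1:Fin 4) else k) Et = 0 := by
    rw [hEt]; simp only [map_add, map_mul, rename_Ep]
    show Ep g ν p 1 1 * Ep g ν p 3 0 + Ep g ν p 1 0 * Ep g ν p 3 1 + Ep g ν p 0 1 * Ep g ν p 3 1 = 0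
    rw [Ep_swap g ν p hp 1 0, Ep_self g ν p 1]; ring
  have h3 : rename (fun k => if k = (2:Fin 4) then (0:Fin 4) else k) Et = 0 := by
    rw [hEt]; simp only [map_add, map_mul, rename_Ep]
    show Ep g ν p 1 0 * Ep g ν p 3 0 + Ep g ν p 0 0 * Ep g ν p 3 1 + Ep g ν p 0 1 * Ep g ν p 3 0 = 0
    rw [Ep_swap g ν p hp 1 0, Ep_self g ν p 0]; ring
  have h4 : rename (fun k => if k = (3:Fin 4) then (2:Fin 4) else k) Et = 0 := by
    rw [hEt]; simp only [map_add, map_mul, rename_Ep]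
    show Ep g ν p 1 2 * Ep g ν p 2 0 + Ep g ν p 2 0 * Ep g ν p 2 1 + Ep g ν p 0 1 * Ep g ν p 2 2 = 0
    rw [Ep_swap g ν p hp 2 1, Ep_self g ν p 2]; ring
  have h5 : rename (fun k => if k = (3:Fin 4) then (1:Fin 4) else k) Et = 0 := by
    rw [hEt]; simp only [map_add, map_mul, rename_Ep]
    show Ep g ν p 1 2 * Ep g ν p 1 0 + Ep g ν p 2 0 * Ep g ν p 1 1 + Ep g ν p 0 1 * Ep g ν p 1 2 = 0
    rw [Ep_swap g ν p hp 1 0, Ep_self g ν p 1]; ring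
  have h6 : rename (fun k => if k = (3:Fin 4) then (0:Fin 4) else k) Et = 0 := by
    rw [hEt]; simp only [map_add, map_mul, rename_Ep]
    show Ep g ν p 1 2 * Ep g ν p 0 0 + Ep g ν p 2 0 * Ep g ν p 0 1 + Ep g ν p 0 1 * Ep g ν p 0 2 = 0
    rw [Ep_swap g ν p hp 0 2, Ep_self g ν p 0]; ring
  -- extract factors one by one
  obtain ⟨Q1, hQ1⟩ := sub_dvd_of_rename 1 0 Et h1
  have e1 : Et = (X 1 - X 0) * Q1 := hQ1
  -- step 2
  rw [e1] at h2
  simp only [map_mul, map_sub, rename_X] at h2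
  have h2' : ((X 1 - X 0) : MvPolynomial (Fin 4) ℂ) *
      rename (fun k => if k = (2:Fin 4) then (1:Fin 4) else k) Q1 = 0 := h2
  have h2z : rename (fun k => if k = (2:Fin 4) then (1:Fin 4) else k) Q1 = 0 := by
    rcases mul_eq_zero.mp h2' with h | h
    · exact absurd h (Xsub_ne 1 0 (by decide))
    · exact h
  obtain ⟨Q2, hQ2⟩ := sub_dvd_of_rename 2 1 Q1 h2z
  have e2 : Et = (X 1 - X 0) * (X 2 - X 1) * Q2 := by rw [e1, hQ2]; ring
  -- step 3
  rw [e2] at h3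
  simp only [map_mul, map_sub, rename_X] at h3
  have h3' : ((X 1 - X 0) * (X 0 - X 1) : MvPolynomial (Fin 4) ℂ) *
      rename (fun k => if k = (2:Fin 4) then (0:Fin 4) else k) Q2 = 0 := h3
  have h3z : rename (fun k => if k = (2:Fin 4) then (0:Fin 4) else k) Q2 = 0 := by
    rcases mul_eq_zero.mp h3' with h | h
    · exact absurd h (mul_ne_zero (Xsub_ne 1 0 (by decide)) (Xsub_ne 0 1 (by decide)))
    · exact h
  obtain ⟨Q3, hQ3⟩ := sub_dvd_of_rename 2 0 Q2 h3z
  have e3 : Et = (X 1 - X 0) * (X 2 - X 1) * (X 2 - X 0) * Q3 := by rw [e2, hQ3]; ring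
  -- step 4
  rw [e3] at h4
  simp only [map_mul, map_sub, rename_X] at h4
  have h4' : ((X 1 - X 0) * (X 2 - X 1) * (X 2 - X 0) : MvPolynomial (Fin 4) ℂ) *
      rename (fun k => if k = (3:Fin 4) then (2:Fin 4) else k) Q3 = 0 := h4
  have h4z : rename (fun k => if k = (3:Fin 4) then (2:Fin 4) else k) Q3 = 0 := by
    rcases mul_eq_zero.mp h4' with h | h
    · exact absurd h (mul_ne_zero (mul_ne_zero (Xsub_ne 1 0 (by decide))
        (Xsub_ne 2 1 (by decide))) (Xsub_ne 2 0 (by decide)))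
    · exact h
  obtain ⟨Q4, hQ4⟩ := sub_dvd_of_rename 3 2 Q3 h4z
  have e4 : Et = (X 1 - X 0) * (X 2 - X 1) * (X 2 - X 0) * (X 3 - X 2) * Q4 := by
    rw [e3, hQ4]; ring
  -- step 5
  rw [e4] at h5
  simp only [map_mul, map_sub, rename_X] at h5
  have h5' : ((X 1 - X 0) * (X 2 - X 1) * (X 2 - X 0) * (X 1 - X 2) : MvPolynomial (Fin 4) ℂ) *
      rename (fun k => if k = (3:Fin 4) then (1:Fin 4) else k) Q4 = 0 := h5
  have h5z : rename (fun k => if k = (3:Fin 4) then (1:Fin 4) else k) Q4 = 0 := by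
    rcases mul_eq_zero.mp h5' with h | h
    · exact absurd h (mul_ne_zero (mul_ne_zero (mul_ne_zero (Xsub_ne 1 0 (by decide))
        (Xsub_ne 2 1 (by decide))) (Xsub_ne 2 0 (by decide))) (Xsub_ne 1 2 (by decide)))
    · exact h
  obtain ⟨Q5, hQ5⟩ := sub_dvd_of_rename 3 1 Q4 h5z
  have e5 : Et = (X 1 - X 0) * (X 2 - X 1) * (X 2 - X 0) * (X 3 - X 2) * (X 3 - X 1) * Q5 := by
    rw [e4, hQ5]; ring
  -- step 6
  rw [e5] at h6
  simp only [map_mul, map_sub, rename_X] at h6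
  have h6' : ((X 1 - X 0) * (X 2 - X 1) * (X 2 - X 0) * (X 0 - X 2) * (X 0 - X 1) :
      MvPolynomial (Fin 4) ℂ) *
      rename (fun k => if k = (3:Fin 4) then (0:Fin 4) else k) Q5 = 0 := h6
  have h6z : rename (fun k => if k = (3:Fin 4) then (0:Fin 4) else k) Q5 = 0 := by
    rcases mul_eq_zero.mp h6' with h | h
    · exact absurd h (mul_ne_zero (mul_ne_zero (mul_ne_zero (mul_ne_zero
        (Xsub_ne 1 0 (by decide)) (Xsub_ne 2 1 (by decide))) (Xsub_ne 2 0 (by decide)))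
        (Xsub_ne 0 2 (by decide))) (Xsub_ne 0 1 (by decide)))
    · exact h
  obtain ⟨Q6, hQ6⟩ := sub_dvd_of_rename 3 0 Q5 h6z
  have e6 : Et = (X 1 - X 0) * (X 2 - X 1) * (X 2 - X 0) *
      (X 3 - X 2) * (X 3 - X 1) * (X 3 - X 0) * Q6 := by
    rw [e5, hQ6]; ring
  -- symmetry
  set V : MvPolynomial (Fin 4) ℂ :=
    (X 1 - X 0) * (X 2 - X 1) * (X 2 - X 0) * (X 3 - X 2) * (X 3 - X 1) * (X 3 - X 0) with hVdef
  have hVne : V ≠ 0 := by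
    rw [hVdef]
    exact mul_ne_zero (mul_ne_zero (mul_ne_zero (mul_ne_zero (mul_ne_zero
      (Xsub_ne 1 0 (by decide)) (Xsub_ne 2 1 (by decide))) (Xsub_ne 2 0 (by decide)))
      (Xsub_ne 3 2 (by decide))) (Xsub_ne 3 1 (by decide))) (Xsub_ne 3 0 (by decide))
  refine ⟨Q6, e6, fun π => ?_⟩
  have hEalt : rename ⇑π Et = ((Equiv.Perm.sign π : ℤ) • Et) :=
    alt_of_swaps Et (fun x y hxy => Etil_swap g ν p hp x y hxy) π
  have hValt : rename ⇑π V = ((Equiv.Perm.sign π : ℤ) • V) :=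
    alt_of_swaps V (fun x y hxy => V_swap x y hxy) π
  have eV : Et = V * Q6 := e6
  have h2eq : ((Equiv.Perm.sign π : ℤ) • V) * rename ⇑π Q6
      = (Equiv.Perm.sign π : ℤ) • (V * Q6) := by
    rw [← hValt, ← map_mul, ← eV, hEalt, eV]
  rw [smul_mul_assoc] at h2eq
  have h3eq : V * rename ⇑π Q6 = V * Q6 := by
    rcases Int.units_eq_one_or (Equiv.Perm.sign π) with hs | hs <;> rw [hs] at h2eq <;>
      simpa using h2eq
  exact mul_left_cancel₀ hVne h3eq
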